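/- Let r ≥ 2 and l ≥ 1. Let ρ : ℂ⟨z_{ij} : 1 ≤ i, j ≤ r⟩ → M_r(ℂ) be the ℂ-algebra homomorphism from the free associative unital ℂ-algebra on r² generators z_{ij} determined by ρ(z_{ij}) = E_{ij}, and let m₀ be the two-sided ideal generated by all the z_{ij}. Then the two-sided ideal generated by the kernel of ρ together with the set {fg − gf : f ∈ m₀, g ∈ m₀^l} is the whole algebra ℂ⟨z_{ij} : 1 ≤ i, j ≤ r⟩. -/

import Mathlib

/-- The ℂ-algebra homomorphism `ρ : ℂ⟨z_{ij}⟩ → M_r(ℂ)` sending `z_{ij}` to the elementary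
matrix `E_{ij}` (Example 2.1.7(3)). -/
noncomputable def matrixPointHom (r : ℕ) :
    FreeAlgebra ℂ (Fin r × Fin r) →ₐ[ℂ] Matrix (Fin r) (Fin r) ℂ :=
  FreeAlgebra.lift ℂ fun p => Matrix.single p.1 p.2 1

/-- The two-sided ideal `m₀ = (z_{ij} : 1 ≤ i,j ≤ r)` of `ℂ⟨z_{ij}⟩`. -/
noncomputable def augIdeal (r : ℕ) : TwoSidedIdeal (FreeAlgebra ℂ (Fin r × Fin r)) :=
  TwoSidedIdeal.span (Set.range (FreeAlgebra.ι ℂ))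

/-- The `l`-th power `m₀^l` of the two-sided ideal `m₀`: the two-sided ideal generated by
products of `l` elements of `m₀`. -/
noncomputable def augIdealPow (r l : ℕ) : TwoSidedIdeal (FreeAlgebra ℂ (Fin r × Fin r)) :=
  TwoSidedIdeal.span {x | ∃ f : Fin l → FreeAlgebra ℂ (Fin r × Fin r),
    (∀ i, f i ∈ augIdeal r) ∧ x = (List.ofFn f).prod}

/-- Example 2.1.7(3): the two-sided ideal generated by `Ker ρ` together with
`[m₀, m₀^l] = {fg - gf : f ∈ m₀, g ∈ m₀^l}` is the whole algebra, i.e. the Azumaya/matrix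
point on `ncA^{r²}` has empty intersection with the master `l`-commutative subscheme. -/
theorem matrixPoint_disjoint_from_master_commutative (r l : ℕ) (hr : 2 ≤ r) (hl : 1 ≤ l) :
    TwoSidedIdeal.span ({x | matrixPointHom r x = 0} ∪
        {x | ∃ f g : FreeAlgebra ℂ (Fin r × Fin r),
          f ∈ augIdeal r ∧ g ∈ augIdealPow r l ∧ x = f * g - g * f}) = ⊤ := by
  classical
  set I := TwoSidedIdeal.span ({x | matrixPointHom r x = 0} ∪
        {x | ∃ f g : FreeAlgebra ℂ (Fin r × Fin r),
          f ∈ augIdeal r ∧ g ∈ augIdealPow r l ∧ x = f * g - g * f}) with hI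
  rw [← TwoSidedIdeal.one_mem_iff]
  set i0 : Fin r := ⟨0, by omega⟩ with hi0
  set i1 : Fin r := ⟨1, by omega⟩ with hi1
  have hne : i1 ≠ i0 := by simp [hi0, hi1, Fin.ext_iff]
  set u : FreeAlgebra ℂ (Fin r × Fin r) := FreeAlgebra.ι ℂ (i0, i1) with hu'
  set v : FreeAlgebra ℂ (Fin r × Fin r) := FreeAlgebra.ι ℂ (i0, i0) with hv'
  have hu : u ∈ augIdeal r := TwoSidedIdeal.subset_span ⟨_, rfl⟩
  have hv : v ∈ augIdeal r := TwoSidedIdeal.subset_span ⟨_, rfl⟩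
  have hvl : v ^ l ∈ augIdealPow r l := by
    apply TwoSidedIdeal.subset_span
    exact ⟨fun _ => v, fun _ => hv, by
      simp [List.ofFn_const, List.prod_replicate]⟩
  set c := u * v ^ l - v ^ l * u with hc'
  have hc : c ∈ I := TwoSidedIdeal.subset_span (Or.inr ⟨u, v ^ l, hu, hvl, rfl⟩)
  have hE : ∀ p : Fin r × Fin r, matrixPointHom r (FreeAlgebra.ι ℂ p)
      = Matrix.single p.1 p.2 1 := fun p => FreeAlgebra.lift_ι_apply _ _
  have hidem : IsIdempotentElem (Matrix.single i0 i0 (1 : ℂ)) := by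
    unfold IsIdempotentElem
    rw [Matrix.single_mul_single_same, mul_one]
  have h00pow : (Matrix.single i0 i0 (1 : ℂ)) ^ l = Matrix.single i0 i0 1 := by
    obtain ⟨n, rfl⟩ : ∃ n, l = n + 1 := ⟨l - 1, by omega⟩
    exact hidem.pow_succ_eq n
  have hρc : matrixPointHom r c = -(Matrix.single i0 i1 1) := by
    rw [hc', map_sub, map_mul, map_mul, map_pow, hu', hv', hE, hE, h00pow,
      Matrix.single_mul_single_of_ne (h := hne), Matrix.single_mul_single_same, mul_one,
      zero_sub]
  set s : FreeAlgebra ℂ (Fin r × Fin r) :=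
    ∑ i : Fin r, FreeAlgebra.ι ℂ (i, i0) * c * FreeAlgebra.ι ℂ (i1, i) with hs'
  have hs : s ∈ I := by
    apply sum_mem
    intro i _
    exact I.mul_mem_right _ _ (I.mul_mem_left _ _ hc)
  have hρs : matrixPointHom r s = -1 := by
    rw [hs', map_sum]
    have : ∀ i : Fin r, matrixPointHom r (FreeAlgebra.ι ℂ (i, i0) * c * FreeAlgebra.ι ℂ (i1, i))
        = -(Matrix.single i i (1 : ℂ)) := by
      intro i
      rw [map_mul, map_mul, hρc, hE, hE, mul_neg, neg_mul,
        Matrix.single_mul_single_same, Matrix.single_mul_single_same, mul_one, one_mul]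
    rw [Finset.sum_congr rfl fun i _ => this i, Finset.sum_neg_distrib, neg_inj]
    ext a b
    by_cases hab : a = b
    · subst hab
      simp [Matrix.sum_apply, Matrix.single, Finset.sum_ite_eq]
    · simp only [Matrix.sum_apply, Matrix.single, Matrix.of_apply, Matrix.one_apply,
        if_neg hab]
      rw [Finset.sum_eq_zero]
      intro x _
      rw [if_neg]
      rintro ⟨rfl, rfl⟩
      exact hab rfl
  have hker : (1 + s) ∈ I := by
    apply TwoSidedIdeal.subset_span
    left
    show matrixPointHom r (1 + s) = 0
    rw [map_add, map_one, hρs, add_neg_cancel]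
  rw [← add_sub_cancel_right 1 s]
  exact I.sub_mem hker hs
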